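/- Under the hypotheses of the previous statement (𝔄(λ,k)(φ,α,ψ,β) = 0 with k² − λ² ≠ 0), the components α, β, φ₃, ψ₃ satisfy the Helmholtz equations Δ(λ)α + k²α = 0, Δ(λ)β + k²β = 0, Δ(λ)φ₃ + k²φ₃ = 0, Δ(λ)ψ₃ + k²ψ₃ = 0 in Ω, where Δ(λ)u = ∂₁²u + ∂₂²u − λ²u. -/

import Mathlib

noncomputable def pd2 (i : Fin 2) (f : (Fin 2 → ℝ) → ℂ) (x : Fin 2 → ℝ) : ℂ :=
  fderiv ℝ f x (Pi.single i 1)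

noncomputable def gradl (lam : ℂ) (a : (Fin 2 → ℝ) → ℂ) (x : Fin 2 → ℝ) : Fin 3 → ℂ :=
  ![pd2 0 a x, pd2 1 a x, Complex.I * lam * a x]

noncomputable def divl (lam : ℂ) (F : (Fin 2 → ℝ) → Fin 3 → ℂ) (x : Fin 2 → ℝ) : ℂ :=
  pd2 0 (fun y => F y 0) x + pd2 1 (fun y => F y 1) x + Complex.I * lam * F x 2

noncomputable def rotl (lam : ℂ) (F : (Fin 2 → ℝ) → Fin 3 → ℂ) (x : Fin 2 → ℝ) : Fin 3 → ℂ :=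
  ![pd2 1 (fun y => F y 2) x - Complex.I * lam * F x 1,
    Complex.I * lam * F x 0 - pd2 0 (fun y => F y 2) x,
    pd2 0 (fun y => F y 1) x - pd2 1 (fun y => F y 0) x]

noncomputable def lapl (lam : ℂ) (f : (Fin 2 → ℝ) → ℂ) (x : Fin 2 → ℝ) : ℂ :=
  pd2 0 (pd2 0 f) x + pd2 1 (pd2 1 f) x - lam ^ 2 * f x

def ccross (a b : Fin 3 → ℂ) : Fin 3 → ℂ :=
  ![a 1 * b 2 - a 2 * b 1, a 2 * b 0 - a 0 * b 2, a 0 * b 1 - a 1 * b 0]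

open Filter in
private lemma pd2_zero_of_eqOn {Ω : Set (Fin 2 → ℝ)} (hΩ : IsOpen Ω) {x : Fin 2 → ℝ}
    (hx : x ∈ Ω) {f : (Fin 2 → ℝ) → ℂ} (hf : ∀ y ∈ Ω, f y = 0) (i : Fin 2) :
    pd2 i f x = 0 := by
  have h : f =ᶠ[nhds x] fun _ => (0 : ℂ) := eventually_of_mem (hΩ.mem_nhds hx) hf
  rw [pd2, h.fderiv_eq]
  simp

private lemma pd2_lin4 {x : Fin 2 → ℝ} {c1 c2 c3 c4 : ℂ} {g1 g2 g3 g4 : (Fin 2 → ℝ) → ℂ}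
    (h1 : DifferentiableAt ℝ g1 x) (h2 : DifferentiableAt ℝ g2 x)
    (h3 : DifferentiableAt ℝ g3 x) (h4 : DifferentiableAt ℝ g4 x) (i : Fin 2) :
    pd2 i (fun y => c1 * g1 y + c2 * g2 y + c3 * g3 y + c4 * g4 y) x =
      c1 * pd2 i g1 x + c2 * pd2 i g2 x + c3 * pd2 i g3 x + c4 * pd2 i g4 x := by
  have H : HasFDerivAt (fun y => c1 * g1 y + c2 * g2 y + c3 * g3 y + c4 * g4 y)
      (((c1 • fderiv ℝ g1 x + c2 • fderiv ℝ g2 x) + c3 • fderiv ℝ g3 x)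
        + c4 • fderiv ℝ g4 x) x :=
    (((h1.hasFDerivAt.const_mul c1).add (h2.hasFDerivAt.const_mul c2)).add
        (h3.hasFDerivAt.const_mul c3)).add (h4.hasFDerivAt.const_mul c4)
  simp only [pd2, H.fderiv, ContinuousLinearMap.add_apply, ContinuousLinearMap.coe_smul',
    Pi.smul_apply, smul_eq_mul]

private lemma pd2_contDiffAt {x : Fin 2 → ℝ} {f : (Fin 2 → ℝ) → ℂ}
    (hf : ContDiffAt ℝ (⊤ : ℕ∞) f x) (i : Fin 2) :
    ContDiffAt ℝ (⊤ : ℕ∞) (pd2 i f) x := by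
  have h1 : ContDiffAt ℝ (⊤ : ℕ∞) (fderiv ℝ f) x :=
    hf.fderiv_right (by exact_mod_cast le_top)
  exact h1.clm_apply contDiffAt_const

private lemma pd2_diffAt {x : Fin 2 → ℝ} {f : (Fin 2 → ℝ) → ℂ}
    (hf : ContDiffAt ℝ (⊤ : ℕ∞) f x) (i : Fin 2) :
    DifferentiableAt ℝ (pd2 i f) x :=
  (pd2_contDiffAt hf i).differentiableAt (by simp)

private lemma pd2_eq4 {Ω : Set (Fin 2 → ℝ)} (hΩ : IsOpen Ω) {x : Fin 2 → ℝ} (hx : x ∈ Ω)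
    {c1 c2 c3 c4 : ℂ} {g1 g2 g3 g4 : (Fin 2 → ℝ) → ℂ}
    (h1 : DifferentiableAt ℝ g1 x) (h2 : DifferentiableAt ℝ g2 x)
    (h3 : DifferentiableAt ℝ g3 x) (h4 : DifferentiableAt ℝ g4 x)
    (hE : ∀ y ∈ Ω, c1 * g1 y + c2 * g2 y + c3 * g3 y + c4 * g4 y = 0) (i : Fin 2) :
    c1 * pd2 i g1 x + c2 * pd2 i g2 x + c3 * pd2 i g3 x + c4 * pd2 i g4 x = 0 := by
  rw [← pd2_lin4 h1 h2 h3 h4 i]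
  exact pd2_zero_of_eqOn hΩ hx hE i

private lemma pd2_comm {Ω : Set (Fin 2 → ℝ)} (hΩ : IsOpen Ω) {x : Fin 2 → ℝ} (hx : x ∈ Ω)
    {f : (Fin 2 → ℝ) → ℂ} (hf : ContDiffOn ℝ (⊤ : ℕ∞) f Ω) :
    pd2 0 (pd2 1 f) x = pd2 1 (pd2 0 f) x := by
  have hCA : ContDiffAt ℝ (⊤ : ℕ∞) f x := hf.contDiffAt (hΩ.mem_nhds hx)
  have hsym : IsSymmSndFDerivAt ℝ f x := hCA.isSymmSndFDerivAt (by rw [minSmoothness_of_isRCLikeNormedField]; exact WithTop.coe_le_coe.mpr le_top)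
  have hd : DifferentiableAt ℝ (fderiv ℝ f) x :=
    (hCA.fderiv_right (by exact_mod_cast le_top) :
      ContDiffAt ℝ (⊤ : ℕ∞) (fderiv ℝ f) x).differentiableAt (by simp)
  have key : ∀ i j : Fin 2,
      pd2 i (pd2 j f) x = fderiv ℝ (fderiv ℝ f) x (Pi.single i 1) (Pi.single j 1) := by
    intro i j
    have h0 : pd2 i (pd2 j f) x
        = fderiv ℝ (fun y => (fderiv ℝ f y) (Pi.single j 1)) x (Pi.single i 1) := rfl
    rw [h0, fderiv_clm_apply hd (differentiableAt_const _)]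
    simp
  rw [key 0 1, key 1 0]
  exact hsym _ _

/-- the axial components of an eigenvector of the augmented pencil
𝔄(λ,k) satisfy Helmholtz equations. -/
theorem pencil_axial_helmholtz
    (Ω : Set (Fin 2 → ℝ)) (hΩ : IsOpen Ω) (k lam : ℂ) (hklam : k ^ 2 - lam ^ 2 ≠ 0)
    (φ ψ : (Fin 2 → ℝ) → Fin 3 → ℂ) (α β : (Fin 2 → ℝ) → ℂ)
    (hφ : ContDiffOn ℝ (⊤ : ℕ∞) φ Ω) (hψ : ContDiffOn ℝ (⊤ : ℕ∞) ψ Ω)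
    (hα : ContDiffOn ℝ (⊤ : ℕ∞) α Ω) (hβ : ContDiffOn ℝ (⊤ : ℕ∞) β Ω)
    (e1 : ∀ x ∈ Ω, ∀ j, Complex.I * rotl lam ψ x j + Complex.I * gradl lam β x j - k * φ x j = 0)
    (e2 : ∀ x ∈ Ω, -Complex.I * divl lam ψ x - k * α x = 0)
    (e3 : ∀ x ∈ Ω, ∀ j, -Complex.I * rotl lam φ x j - Complex.I * gradl lam α x j - k * ψ x j = 0)
    (e4 : ∀ x ∈ Ω, Complex.I * divl lam φ x - k * β x = 0) :
    ∀ x ∈ Ω,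
      lapl lam α x + k ^ 2 * α x = 0 ∧
      lapl lam β x + k ^ 2 * β x = 0 ∧
      lapl lam (fun y => φ y 2) x + k ^ 2 * φ x 2 = 0 ∧
      lapl lam (fun y => ψ y 2) x + k ^ 2 * ψ x 2 = 0 := by
  intro x hx
  -- component smoothness
  have cφ : ∀ j, ContDiffOn ℝ (⊤ : ℕ∞) (fun y => φ y j) Ω := fun j => contDiffOn_pi.mp hφ j
  have cψ : ∀ j, ContDiffOn ℝ (⊤ : ℕ∞) (fun y => ψ y j) Ω := fun j => contDiffOn_pi.mp hψ j
  have cφx : ∀ j, ContDiffAt ℝ (⊤ : ℕ∞) (fun y => φ y j) x :=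
    fun j => (cφ j).contDiffAt (hΩ.mem_nhds hx)
  have cψx : ∀ j, ContDiffAt ℝ (⊤ : ℕ∞) (fun y => ψ y j) x :=
    fun j => (cψ j).contDiffAt (hΩ.mem_nhds hx)
  have cαx : ContDiffAt ℝ (⊤ : ℕ∞) α x := hα.contDiffAt (hΩ.mem_nhds hx)
  have cβx : ContDiffAt ℝ (⊤ : ℕ∞) β x := hβ.contDiffAt (hΩ.mem_nhds hx)
  have dφ : ∀ j, DifferentiableAt ℝ (fun y => φ y j) x :=
    fun j => (cφx j).differentiableAt (by simp)
  have dψ : ∀ j, DifferentiableAt ℝ (fun y => ψ y j) x :=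
    fun j => (cψx j).differentiableAt (by simp)
  have dDφ : ∀ (i : Fin 2) (j : Fin 3), DifferentiableAt ℝ (pd2 i (fun y => φ y j)) x :=
    fun i j => pd2_diffAt (cφx j) i
  have dDψ : ∀ (i : Fin 2) (j : Fin 3), DifferentiableAt ℝ (pd2 i (fun y => ψ y j)) x :=
    fun i j => pd2_diffAt (cψx j) i
  have dDα : ∀ i : Fin 2, DifferentiableAt ℝ (pd2 i α) x := fun i => pd2_diffAt cαx i
  have dDβ : ∀ i : Fin 2, DifferentiableAt ℝ (pd2 i β) x := fun i => pd2_diffAt cβx i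
  -- canonical forms of the equation components, valid on Ω
  have E30 : ∀ y ∈ Ω, (-Complex.I) * pd2 1 (fun z => φ z 2) y
      + (Complex.I * Complex.I * lam) * φ y 1 + (-Complex.I) * pd2 0 α y
      + (-k) * ψ y 0 = 0 := by
    intro y hy
    have h := e3 y hy 0
    simp only [rotl, gradl, Matrix.cons_val_zero] at h
    linear_combination h
  have E31 : ∀ y ∈ Ω, (-(Complex.I * Complex.I * lam)) * φ y 0
      + Complex.I * pd2 0 (fun z => φ z 2) y + (-Complex.I) * pd2 1 α y
      + (-k) * ψ y 1 = 0 := by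
    intro y hy
    have h := e3 y hy 1
    simp only [rotl, gradl, Matrix.cons_val_one, Matrix.head_cons, Matrix.cons_val_zero] at h
    linear_combination h
  have E10 : ∀ y ∈ Ω, Complex.I * pd2 1 (fun z => ψ z 2) y
      + (-(Complex.I * Complex.I * lam)) * ψ y 1 + Complex.I * pd2 0 β y
      + (-k) * φ y 0 = 0 := by
    intro y hy
    have h := e1 y hy 0
    simp only [rotl, gradl, Matrix.cons_val_zero] at h
    linear_combination h
  have E11 : ∀ y ∈ Ω, (Complex.I * Complex.I * lam) * ψ y 0
      + (-Complex.I) * pd2 0 (fun z => ψ z 2) y + Complex.I * pd2 1 β y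
      + (-k) * φ y 1 = 0 := by
    intro y hy
    have h := e1 y hy 1
    simp only [rotl, gradl, Matrix.cons_val_one, Matrix.head_cons, Matrix.cons_val_zero] at h
    linear_combination h
  -- differentiated equations
  have h30a := pd2_eq4 hΩ hx (dDφ 1 2) (dφ 1) (dDα 0) (dψ 0) E30 0
  have h30b := pd2_eq4 hΩ hx (dDφ 1 2) (dφ 1) (dDα 0) (dψ 0) E30 1
  have h31a := pd2_eq4 hΩ hx (dφ 0) (dDφ 0 2) (dDα 1) (dψ 1) E31 0
  have h31b := pd2_eq4 hΩ hx (dφ 0) (dDφ 0 2) (dDα 1) (dψ 1) E31 1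
  have h10a := pd2_eq4 hΩ hx (dDψ 1 2) (dψ 1) (dDβ 0) (dφ 0) E10 0
  have h10b := pd2_eq4 hΩ hx (dDψ 1 2) (dψ 1) (dDβ 0) (dφ 0) E10 1
  have h11a := pd2_eq4 hΩ hx (dψ 0) (dDψ 0 2) (dDβ 1) (dφ 1) E11 0
  have h11b := pd2_eq4 hΩ hx (dψ 0) (dDψ 0 2) (dDβ 1) (dφ 1) E11 1
  -- pointwise equations at x
  have h32x := e3 x hx 2
  simp only [rotl, gradl, Matrix.cons_val_two, Matrix.tail_cons, Matrix.head_cons] at h32x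
  have h12x := e1 x hx 2
  simp only [rotl, gradl, Matrix.cons_val_two, Matrix.tail_cons, Matrix.head_cons] at h12x
  have h2x := e2 x hx
  simp only [divl] at h2x
  have h4x := e4 x hx
  simp only [divl] at h4x
  -- Schwarz symmetry of second derivatives
  have sφ2 : pd2 0 (pd2 1 (fun y => φ y 2)) x = pd2 1 (pd2 0 (fun y => φ y 2)) x :=
    pd2_comm hΩ hx (cφ 2)
  have sψ2 : pd2 0 (pd2 1 (fun y => ψ y 2)) x = pd2 1 (pd2 0 (fun y => ψ y 2)) x :=
    pd2_comm hΩ hx (cψ 2)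
  have sα : pd2 0 (pd2 1 α) x = pd2 1 (pd2 0 α) x := pd2_comm hΩ hx hα
  have sβ : pd2 0 (pd2 1 β) x = pd2 1 (pd2 0 β) x := pd2_comm hΩ hx hβ
  refine ⟨?_, ?_, ?_, ?_⟩
  · simp only [lapl]
    linear_combination Complex.I * h30a + Complex.I * h31b
      + Complex.I * Complex.I * lam * h32x + Complex.I * Complex.I * k * h2x
      + Complex.I * Complex.I * sφ2
      + (pd2 0 (pd2 0 α) x + pd2 1 (pd2 1 α) x
        + Complex.I * k * pd2 0 (fun y => ψ y 0) x
        + Complex.I * k * pd2 1 (fun y => ψ y 1) x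
        + Complex.I * Complex.I * lam ^ 2 * α x - lam ^ 2 * α x
        + Complex.I * Complex.I * lam * k * ψ x 2 + k ^ 2 * α x) * Complex.I_mul_I
  · simp only [lapl]
    linear_combination (-Complex.I) * h10a + (-Complex.I) * h11b
      + (-(Complex.I * Complex.I * lam)) * h12x + Complex.I * Complex.I * k * h4x
      + Complex.I * Complex.I * sψ2
      + (pd2 0 (pd2 0 β) x + pd2 1 (pd2 1 β) x
        - Complex.I * k * pd2 0 (fun y => φ y 0) x
        - Complex.I * k * pd2 1 (fun y => φ y 1) x
        + Complex.I * Complex.I * lam ^ 2 * β x - lam ^ 2 * β x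
        - Complex.I * Complex.I * lam * k * φ x 2 + k ^ 2 * β x) * Complex.I_mul_I
  · simp only [lapl]
    linear_combination (-Complex.I) * h31a + Complex.I * h30b
      + (-(Complex.I * Complex.I * lam)) * h4x + Complex.I * Complex.I * k * h12x
      + (-(Complex.I * Complex.I)) * sα
      + (pd2 0 (pd2 0 (fun y => φ y 2)) x + pd2 1 (pd2 1 (fun y => φ y 2)) x
        - Complex.I * k * pd2 0 (fun y => ψ y 1) x
        + Complex.I * k * pd2 1 (fun y => ψ y 0) x
        + Complex.I * Complex.I * lam ^ 2 * φ x 2 - lam ^ 2 * φ x 2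
        - Complex.I * Complex.I * lam * k * β x + k ^ 2 * φ x 2) * Complex.I_mul_I
  · simp only [lapl]
    linear_combination Complex.I * h11a + (-Complex.I) * h10b
      + Complex.I * Complex.I * lam * h2x + Complex.I * Complex.I * k * h32x
      + (-(Complex.I * Complex.I)) * sβ
      + (pd2 0 (pd2 0 (fun y => ψ y 2)) x + pd2 1 (pd2 1 (fun y => ψ y 2)) x
        + Complex.I * k * pd2 0 (fun y => φ y 1) x
        - Complex.I * k * pd2 1 (fun y => φ y 0) x
        + Complex.I * Complex.I * lam ^ 2 * ψ x 2 - lam ^ 2 * ψ x 2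
        + Complex.I * Complex.I * lam * k * α x + k ^ 2 * ψ x 2) * Complex.I_mul_I
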